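/- Let f : ℝ² → ℝ, f(x) = x₁⁴ + x₂⁴, constraint h(x) = x₁ + x₂ = 0, and penalty function f^ε(x) = x₁⁴ + x₂⁴ − (2x₁³ + 2x₂³)(x₁ + x₂) + (1/ε)(x₁ + x₂)². Then at any point x with x₁ = 0 and x₂ ≠ 0, the determinant of the Hessian of f^ε equals −36 x₂⁴ < 0, independent of ε. Hence f^ε is not convex on any open set containing a point (0, x₂) with x₂ ≠ 0, for any ε > 0. -/

import Mathlib

set_option maxHeartbeats 1000000


open Matrix

/-- For `f(x) = x₁⁴ + x₂⁴` with constraint `x₁ + x₂ = 0`, the penalty function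
`f^ε(x) = x₁⁴ + x₂⁴ − (2x₁³ + 2x₂³)(x₁ + x₂) + (1/ε)(x₁ + x₂)²` has, at any point with
`x₁ = 0`, `x₂ ≠ 0`, a Hessian with determinant `−36 x₂⁴ < 0`, independent of `ε`;
hence `f^ε` is not convex on any open set containing such a point, for any `ε > 0`. -/
theorem stmt_3 (ε : ℝ) (hε : 0 < ε)
    (fε : (Fin 2 → ℝ) → ℝ)
    (hfε : ∀ x, fε x = (x 0) ^ 4 + (x 1) ^ 4
      - (2 * (x 0) ^ 3 + 2 * (x 1) ^ 3) * (x 0 + x 1) + (1 / ε) * (x 0 + x 1) ^ 2)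
    (H : (Fin 2 → ℝ) → Matrix (Fin 2) (Fin 2) ℝ)
    (hH : ∀ x, H x =
      !![-12 * (x 0) ^ 2 - 12 * (x 0) * (x 1) + 2 / ε, -6 * (x 0) ^ 2 - 6 * (x 1) ^ 2 + 2 / ε;
         -6 * (x 0) ^ 2 - 6 * (x 1) ^ 2 + 2 / ε, -12 * (x 1) ^ 2 - 12 * (x 0) * (x 1) + 2 / ε])
    (x : Fin 2 → ℝ) (hx0 : x 0 = 0) (hx1 : x 1 ≠ 0) :
    (H x).det = -36 * (x 1) ^ 4 ∧ (H x).det < 0 ∧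
      ∀ s : Set (Fin 2 → ℝ), IsOpen s → x ∈ s → ¬ ConvexOn ℝ s fε := by
  have hεne : ε ≠ 0 := ne_of_gt hε
  have hdet : (H x).det = -36 * (x 1) ^ 4 := by
    rw [hH, Matrix.det_fin_two_of, hx0]
    field_simp
    ring
  refine ⟨hdet, ?_, ?_⟩
  · rw [hdet]
    have : 0 < (x 1) ^ 4 := by positivity
    nlinarith
  · intro s hs hxs hconv
    set t := x 1 with ht
    set c : ℝ := 3 * ε * t ^ 2 with hc
    set A : ℝ := -c ^ 2 * ((c - 1) ^ 2 + 1) + 2 * (c - 1) ^ 2 with hA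
    set B : ℝ := |A| + 1 with hB
    have hBpos : (0 : ℝ) < B := by positivity
    have ht4 : (0 : ℝ) < t ^ 4 := by positivity
    have hKpos : (0 : ℝ) < 9 * ε * t ^ 4 / B := by positivity
    obtain ⟨r, hr, hball⟩ := Metric.isOpen_iff.mp hs x hxs
    set δ : ℝ := min (r / (2 * (|c - 1| + 1))) (Real.sqrt (9 * ε * t ^ 4 / B) / 2) with hδ
    have hδpos : 0 < δ := by
      apply lt_min
      · positivity
      · have := Real.sqrt_pos.mpr hKpos
        linarith
    -- the two points
    set p : Fin 2 → ℝ := ![δ * (c - 1), t + δ] with hp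
    set q : Fin 2 → ℝ := ![-(δ * (c - 1)), t - δ] with hq
    -- membership in the ball
    have hcb : |c - 1| + 1 ≥ 1 := by nlinarith [abs_nonneg (c - 1)]
    have hδr : δ * (|c - 1| + 1) < r := by
      have h1 : δ ≤ r / (2 * (|c - 1| + 1)) := min_le_left _ _
      have h2 : 0 < |c - 1| + 1 := by positivity
      calc δ * (|c - 1| + 1) ≤ (r / (2 * (|c - 1| + 1))) * (|c - 1| + 1) := by
            apply mul_le_mul_of_nonneg_right h1 (le_of_lt h2)
        _ = r / 2 := by field_simp
        _ < r := by linarith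
    have hmem : ∀ y : Fin 2 → ℝ, (∀ i, |y i - x i| < r) → y ∈ s := by
      intro y hy
      apply hball
      rw [Metric.mem_ball, dist_pi_lt_iff hr]
      intro i
      rw [Real.dist_eq]
      exact hy i
    have habs1 : |δ * (c - 1)| < r := by
      calc |δ * (c - 1)| = δ * |c - 1| := by rw [abs_mul, abs_of_pos hδpos]
        _ ≤ δ * (|c - 1| + 1) := by nlinarith
        _ < r := hδr
    have habs2 : |δ| < r := by
      rw [abs_of_pos hδpos]
      nlinarith [abs_nonneg (c - 1)]
    have hps : p ∈ s := by
      apply hmem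
      intro i
      fin_cases i
      · simpa [hp, hx0] using habs1
      · have : p 1 - x 1 = δ := by simp [hp, ht]
        rw [show ((⟨1, by norm_num⟩ : Fin 2) : Fin 2) = 1 from rfl, this]
        exact habs2
    have hqs : q ∈ s := by
      apply hmem
      intro i
      fin_cases i
      · simpa [hq, hx0] using habs1
      · have : q 1 - x 1 = -δ := by simp [hq, ht]
        rw [show ((⟨1, by norm_num⟩ : Fin 2) : Fin 2) = 1 from rfl, this, abs_neg]
        exact habs2
    -- midpoint is x
    have hmid : (1/2 : ℝ) • p + (1/2 : ℝ) • q = x := by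
      funext i
      fin_cases i <;> simp [hp, hq, hx0] <;> ring
    have hconvex := hconv.2 hps hqs (by norm_num : (0:ℝ) ≤ 1/2)
      (by norm_num : (0:ℝ) ≤ 1/2) (by norm_num : (1:ℝ)/2 + 1/2 = 1)
    rw [hmid] at hconvex
    -- key bound on δ²
    have hδsq : A * δ ^ 2 < 9 * ε * t ^ 4 := by
      have h1 : δ ≤ Real.sqrt (9 * ε * t ^ 4 / B) / 2 := min_le_right _ _
      have h2 : δ ^ 2 ≤ (9 * ε * t ^ 4 / B) / 4 := by
        have := Real.sq_sqrt (le_of_lt hKpos)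
        nlinarith [Real.sqrt_nonneg (9 * ε * t ^ 4 / B), hδpos]
      have hAB : A ≤ B := by
        have := le_abs_self A
        simp only [hB]; linarith
      have h3 : A * δ ^ 2 ≤ B * δ ^ 2 := by nlinarith [sq_nonneg δ]
      have h4 : B * δ ^ 2 ≤ B * ((9 * ε * t ^ 4 / B) / 4) := by
        apply mul_le_mul_of_nonneg_left h2 (le_of_lt hBpos)
      have h5 : B * ((9 * ε * t ^ 4 / B) / 4) = (9 * ε * t ^ 4) / 4 := by
        field_simp
      nlinarith
    -- the key identity
    have hp0 : p 0 = δ * (c - 1) := rfl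
    have hp1 : p 1 = t + δ := rfl
    have hq0 : q 0 = -(δ * (c - 1)) := rfl
    have hq1 : q 1 = t - δ := rfl
    have hkey : fε p + fε q - 2 * fε x = 2 * δ ^ 2 * (A * δ ^ 2 - 9 * ε * t ^ 4) := by
      rw [hfε p, hfε q, hfε x, hx0, hp0, hp1, hq0, hq1, hA, hc]
      field_simp
      ring
    have hlt : fε p + fε q < 2 * fε x := by
      have : 2 * δ ^ 2 * (A * δ ^ 2 - 9 * ε * t ^ 4) < 0 := by
        apply mul_neg_of_pos_of_neg
        · positivity
        · linarith
      linarith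
    -- contradiction
    have : fε x ≤ (1/2 : ℝ) * fε p + (1/2 : ℝ) * fε q := by
      simpa using hconvex
    linarith
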